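/- Let P ⊂ ℝ^n be a Gorenstein polytope of index k, let m be the unique lattice point in the relative interior of kP, and let p := (1/k)m. Then pllenv(cone P) = (plenv(cone P))_ℤ. -/

import Mathlib

open Set Pointwise
open scoped Classical

noncomputable section

namespace ArxivFreeSum

/-- A point of `ℝ^m` is an integer lattice point iff all coordinates are integers. -/
def IsLat {m : ℕ} (x : Fin m → ℝ) : Prop := ∀ i, ∃ z : ℤ, x i = (z : ℝ)

/-- The set of integer lattice points of a set `S`. -/
def latt {m : ℕ} (S : Set (Fin m → ℝ)) : Set (Fin m → ℝ) := {x | x ∈ S ∧ IsLat x}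

variable {n : ℕ}

/-- The affine embedding `α : ℝ^n → ℝ^{n+1}`, `a ↦ (a, 1)`. -/
def emb (a : Fin n → ℝ) : Fin (n + 1) → ℝ := Fin.snoc a 1

/-- The cone over `K`: all nonnegative multiples of `α(K)`. -/
def cone (K : Set (Fin n → ℝ)) : Set (Fin (n + 1) → ℝ) :=
  {x | ∃ l : ℝ, ∃ a ∈ K, 0 ≤ l ∧ x = l • emb a}

/-- The last standard basis vector `e_{n+1}` of `ℝ^{n+1}`. -/
def eLast (n : ℕ) : Fin (n + 1) → ℝ := Pi.single (Fin.last n) 1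

/-- The vertical projection `ε_J` onto the lower envelope of `cone J`. -/
def eps (J : Set (Fin n → ℝ)) (x : Fin (n + 1) → ℝ) : Fin (n + 1) → ℝ :=
  x - sSup {l : ℝ | x - l • eLast n ∈ cone J} • eLast n

/-- The lower envelope of `cone J`. -/
def lenv (J : Set (Fin n → ℝ)) : Set (Fin (n + 1) → ℝ) := eps J '' cone J

/-- The lower lattice envelope of `cone J`. -/
def llenv (J : Set (Fin n → ℝ)) : Set (Fin (n + 1) → ℝ) := eps J '' latt (cone J)

/-- `J ⊕ K` is a free sum. -/
def IsFreeSum (J K : Set (Fin n → ℝ)) : Prop :=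
  (0 : Fin n → ℝ) ∈ J ∧ (0 : Fin n → ℝ) ∈ K ∧
    ∀ m : Fin n → ℝ, m ∈ Submodule.span ℝ (J ∪ K) → IsLat m →
      ∃! q : (Fin n → ℝ) × (Fin n → ℝ),
        (q.1 ∈ Submodule.span ℝ J ∧ IsLat q.1) ∧
        (q.2 ∈ Submodule.span ℝ K ∧ IsLat q.2) ∧ m = q.1 + q.2

/-- `N_{J,K}(m)`: the number of pairs of lattice points of `cone J` and `cone K` summing
to `m`. -/
def Npairs (J K : Set (Fin n → ℝ)) (m : Fin (n + 1) → ℤ) : ℕ :=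
  Set.ncard {q : (Fin (n + 1) → ℝ) × (Fin (n + 1) → ℝ) |
    q.1 ∈ latt (cone J) ∧ q.2 ∈ latt (cone K) ∧ q.1 + q.2 = fun i => (m i : ℝ)}

/-- The coefficientwise form of the multivariate Braun equation
`σ_{cone(J⊕K)} = (1 - z_{n+1}) σ_{cone J} σ_{cone K}`. -/
def BraunEq (J K : Set (Fin n → ℝ)) : Prop :=
  ∀ m : Fin (n + 1) → ℤ,
    (Npairs J K m : ℤ) - (Npairs J K (m - Pi.single (Fin.last n) 1) : ℤ) =
      if (fun i => (m i : ℝ)) ∈ cone (convexHull ℝ (J ∪ K)) then 1 else 0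

/-- A rational polytope: convex hull of finitely many rational points. -/
def IsRatPolytope (P : Set (Fin n → ℝ)) : Prop :=
  ∃ V : Finset (Fin n → ℝ), (∀ v ∈ V, ∀ i, ∃ q : ℚ, v i = (q : ℝ)) ∧
    P = convexHull ℝ (V : Set (Fin n → ℝ))

/-- A lattice polytope: convex hull of finitely many lattice points. -/
def IsLatPolytope (P : Set (Fin n → ℝ)) : Prop :=
  ∃ V : Finset (Fin n → ℝ), (∀ v ∈ V, IsLat v) ∧ P = convexHull ℝ (V : Set (Fin n → ℝ))

/-- The polar dual `P^∨ ⊆ (lin P)^*` of a polytope `P` containing the origin. -/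
def dualSet (P : Set (Fin n → ℝ)) : Set (Module.Dual ℝ (Submodule.span ℝ P)) :=
  {φ | ∀ a : Submodule.span ℝ P, (a : Fin n → ℝ) ∈ P → φ a ≤ 1}

/-- Membership in the dual integer lattice `(lin P)^*_ℤ`. -/
def IsDualLatticePt (P : Set (Fin n → ℝ)) (φ : Module.Dual ℝ (Submodule.span ℝ P)) : Prop :=
  ∀ a : Submodule.span ℝ P, IsLat (a : Fin n → ℝ) → ∃ z : ℤ, φ a = (z : ℝ)

/-- `P^∨` is a lattice polyhedron: every vertex (= extreme point) of `P^∨` lies in the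
dual integer lattice. -/
def DualIsLatticePolyhedron (P : Set (Fin n → ℝ)) : Prop :=
  ∀ φ ∈ Set.extremePoints ℝ (dualSet P), IsDualLatticePt P φ

/-- `den(P^∨)`: the smallest positive integer `d` such that `d • P^∨` is a lattice
polyhedron. -/
def dualDen (P : Set (Fin n → ℝ)) : ℕ :=
  sInf {d : ℕ | 0 < d ∧ ∀ φ ∈ Set.extremePoints ℝ (dualSet P), IsDualLatticePt P ((d : ℝ) • φ)}

/-- `L_P(k)`, with `L_P(0) = 1`. -/
def ehr (P : Set (Fin n → ℝ)) (k : ℕ) : ℕ :=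
  if k = 0 then 1 else Set.ncard (latt ((k : ℝ) • P))

/-- The coefficientwise form of `Ehr_{P⊕Q}(t) = (1-t) Ehr_P(t) Ehr_Q(t)`. -/
def EhrEq (P Q : Set (Fin n → ℝ)) : Prop :=
  ∀ k : ℕ,
    (ehr (convexHull ℝ (P ∪ Q)) k : ℤ) =
      (∑ i ∈ Finset.range (k + 1), (ehr P i : ℤ) * (ehr Q (k - i) : ℤ)) -
        ∑ i ∈ Finset.range k, (ehr P i : ℤ) * (ehr Q (k - 1 - i) : ℤ)

/-- `P` is reflexive: a lattice polytope containing the origin in its relative interior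
whose polar dual is a lattice polytope. -/
def IsReflexive (P : Set (Fin n → ℝ)) : Prop :=
  IsLatPolytope P ∧ (0 : Fin n → ℝ) ∈ intrinsicInterior ℝ P ∧ DualIsLatticePolyhedron P

/-- `P` is Gorenstein of index `k`. -/
def IsGorenstein (P : Set (Fin n → ℝ)) (k : ℕ) : Prop :=
  IsLatPolytope P ∧ 0 < k ∧
    ∃ m : Fin n → ℝ, IsLat m ∧ IsReflexive ((fun x => x - m) '' ((k : ℝ) • P))

/-- `p` is a rational point. -/
def IsRatPt (p : Fin n → ℝ) : Prop := ∀ i, ∃ q : ℚ, p i = (q : ℝ)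

/-- Membership in the lattice `Λ^p` generated by `e_1, …, e_n` and `p`. -/
def InLambda (p x : Fin n → ℝ) : Prop :=
  ∃ (z : Fin n → ℤ) (c : ℤ), x = (fun i => (z i : ℝ)) + (c : ℝ) • p

/-- `den(p)`: the lcm of the denominators of the coordinates of `p`, i.e. the least
positive integer `r` with `r • p` a lattice point. -/
def denPt (p : Fin n → ℝ) : ℕ := sInf {r : ℕ | 0 < r ∧ IsLat ((r : ℝ) • p)}

/-- The projection `ε^p_J` parallel to `α(p)` onto the `p`-lower envelope of `cone J`. -/
def epsP (p : Fin n → ℝ) (J : Set (Fin n → ℝ)) (x : Fin (n + 1) → ℝ) : Fin (n + 1) → ℝ :=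
  x - sSup {l : ℝ | x - l • emb p ∈ cone J} • emb p

/-- The `p`-lower envelope of `cone J`. -/
def plenv (p : Fin n → ℝ) (J : Set (Fin n → ℝ)) : Set (Fin (n + 1) → ℝ) := epsP p J '' cone J

/-- The `p`-lower lattice envelope of `cone J`. -/
def pllenv (p : Fin n → ℝ) (J : Set (Fin n → ℝ)) : Set (Fin (n + 1) → ℝ) :=
  epsP p J '' latt (cone J)

/-- `J ⊕ K` is an affine free sum with common (rational) point `p`. -/
def IsAffineFreeSum (J K : Set (Fin n → ℝ)) (p : Fin n → ℝ) : Prop :=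
  IsRatPt p ∧ p ∈ J ∧ p ∈ K ∧
    ((affineSpan ℝ J : Set (Fin n → ℝ)) ∩ (affineSpan ℝ K : Set (Fin n → ℝ)) = {p}) ∧
    ∀ m : Fin n → ℝ, m ∈ Submodule.span ℝ ((fun x => x - p) '' (J ∪ K)) → InLambda p m →
      ∃! q : (Fin n → ℝ) × (Fin n → ℝ),
        (q.1 ∈ Submodule.span ℝ ((fun x => x - p) '' J) ∧ InLambda p q.1) ∧
        (q.2 ∈ Submodule.span ℝ ((fun x => x - p) '' K) ∧ InLambda p q.2) ∧ m = q.1 + q.2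



section AuxLemmas

variable {n : ℕ}

lemma emb_last (a : Fin n → ℝ) : emb a (Fin.last n) = 1 := by simp [emb]

lemma emb_castSucc (a : Fin n → ℝ) (j : Fin n) : emb a j.castSucc = a j := by
  simp [emb]

lemma mem_cone_iff {K : Set (Fin n → ℝ)} (hK : K.Nonempty) (x : Fin (n + 1) → ℝ) :
    x ∈ cone K ↔ 0 ≤ x (Fin.last n) ∧ Fin.init x ∈ x (Fin.last n) • K := by
  constructor
  · rintro ⟨l, a, ha, hl, rfl⟩
    have hlast : (l • emb a) (Fin.last n) = l := by simp [emb]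
    have hinit : Fin.init (l • emb a) = l • a := by
      funext j; simp [Fin.init, emb]
    rw [hlast, hinit]
    exact ⟨hl, smul_mem_smul_set ha⟩
  · rintro ⟨h0, hmem⟩
    rcases eq_or_lt_of_le h0 with heq | hlt
    · obtain ⟨a, ha⟩ := id hK
      refine ⟨0, a, ha, le_refl _, ?_⟩
      rw [← heq, Set.zero_smul_set hK] at hmem
      have hinit0 : Fin.init x = 0 := hmem
      funext i
      refine Fin.lastCases ?_ ?_ i
      · simp [← heq]
      · intro j
        have := congrFun hinit0 j
        simp [Fin.init] at this
        simp [this]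
    · obtain ⟨a, ha, haeq⟩ := hmem
      refine ⟨x (Fin.last n), a, ha, le_of_lt hlt, ?_⟩
      funext i
      refine Fin.lastCases ?_ ?_ i
      · simp [emb]
      · intro j
        have := congrFun haeq j
        simp [emb, Fin.init] at this ⊢
        exact this.symm

lemma mem_smul_image_iff {k : ℝ} (hk : k ≠ 0) (m : Fin n → ℝ) (P : Set (Fin n → ℝ))
    (y : Fin n → ℝ) (s : ℝ) :
    y ∈ s • P ↔ k • y - s • m ∈ s • ((fun x => x - m) '' (k • P)) := by
  constructor
  · rintro ⟨a, ha, rfl⟩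
    exact ⟨k • a - m, ⟨k • a, smul_mem_smul_set ha, rfl⟩, by module⟩
  · rintro ⟨b, ⟨c, ⟨a, ha, rfl⟩, rfl⟩, heq⟩
    refine ⟨a, ha, ?_⟩
    have h2 : k • (s • a) = k • y := by
      calc k • (s • a) = s • (k • a - m) + s • m := by module
        _ = (k • y - s • m) + s • m := by
              have heq' : s • (k • a - m) = k • y - s • m := heq
              rw [heq']
        _ = k • y := by module
    exact smul_right_injective _ hk h2

lemma sub_emb_mem_cone_iff {P : Set (Fin n → ℝ)} (hP : P.Nonempty) {k : ℝ} (hk : k ≠ 0)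
    (m : Fin n → ℝ) (x : Fin (n + 1) → ℝ) (l : ℝ) :
    x - l • emb (k⁻¹ • m) ∈ cone P ↔
      l ≤ x (Fin.last n) ∧
        k • Fin.init x - x (Fin.last n) • m ∈
          (x (Fin.last n) - l) • ((fun y => y - m) '' (k • P)) := by
  rw [mem_cone_iff hP]
  have hlast : (x - l • emb (k⁻¹ • m)) (Fin.last n) = x (Fin.last n) - l := by
    simp [emb]
  have hinit : Fin.init (x - l • emb (k⁻¹ • m)) = Fin.init x - l • (k⁻¹ • m) := by
    funext j; simp [Fin.init, emb]
  rw [hlast, hinit, mem_smul_image_iff hk m P]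
  have halg : k • (Fin.init x - l • (k⁻¹ • m)) - (x (Fin.last n) - l) • m =
      k • Fin.init x - x (Fin.last n) • m := by
    funext j
    simp [Fin.init]
    field_simp
    ring
  rw [halg, sub_nonneg]

lemma csSup_mem_coneL {P : Set (Fin n → ℝ)} (hPne : P.Nonempty) (hPc : IsCompact P)
    (p : Fin n → ℝ) {x : Fin (n + 1) → ℝ} (hx : x ∈ cone P) :
    x - sSup {l : ℝ | x - l • emb p ∈ cone P} • emb p ∈ cone P := by
  set L := {l : ℝ | x - l • emb p ∈ cone P} with hLdef
  have hne : L.Nonempty := ⟨0, by show x - (0:ℝ) • emb p ∈ cone P; simpa using hx⟩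
  have hub : ∀ l ∈ L, l ≤ x (Fin.last n) := by
    intro l hl
    have h1 := ((mem_cone_iff hPne _).1 hl).1
    have hlast : (x - l • emb p) (Fin.last n) = x (Fin.last n) - l := by simp [emb]
    rw [hlast] at h1; linarith
  have hbdd : BddAbove L := ⟨_, hub⟩
  obtain ⟨u, hmono, hth, humem⟩ := exists_seq_tendsto_sSup hne hbdd
  have hchoice : ∀ j : ℕ, ∃ a ∈ P, Fin.init x - u j • p = (x (Fin.last n) - u j) • a := by
    intro j
    have h1 := (mem_cone_iff hPne _).1 (humem j)
    have hinit : Fin.init (x - u j • emb p) = Fin.init x - u j • p := by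
      funext j'; simp [Fin.init, emb]
    have hlast : (x - u j • emb p) (Fin.last n) = x (Fin.last n) - u j := by simp [emb]
    have h2 := h1.2
    rw [hlast, hinit] at h2
    obtain ⟨a, ha, haeq⟩ := h2
    exact ⟨a, ha, haeq.symm⟩
  choose a hamem haeq using hchoice
  obtain ⟨b, hb, θ, hθmono, hθtend⟩ := hPc.tendsto_subseq hamem
  have hsle : sSup L ≤ x (Fin.last n) := csSup_le hne hub
  have hcomp : Filter.Tendsto (fun j => u (θ j)) Filter.atTop (nhds (sSup L)) :=
    hth.comp hθmono.tendsto_atTop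
  have hten1 : Filter.Tendsto (fun j => (x (Fin.last n) - u (θ j)) • a (θ j))
      Filter.atTop (nhds ((x (Fin.last n) - sSup L) • b)) :=
    ((tendsto_const_nhds.sub hcomp).smul hθtend)
  have hten2 : Filter.Tendsto (fun j => Fin.init x - u (θ j) • p)
      Filter.atTop (nhds (Fin.init x - sSup L • p)) :=
    tendsto_const_nhds.sub (hcomp.smul tendsto_const_nhds)
  have heqseq : (fun j => Fin.init x - u (θ j) • p)
      = fun j => (x (Fin.last n) - u (θ j)) • a (θ j) := by
    funext j; exact haeq (θ j)
  rw [heqseq] at hten2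
  have hlim : Fin.init x - sSup L • p = (x (Fin.last n) - sSup L) • b :=
    tendsto_nhds_unique hten2 hten1
  rw [mem_cone_iff hPne]
  have hlast : (x - sSup L • emb p) (Fin.last n) = x (Fin.last n) - sSup L := by simp [emb]
  have hinit : Fin.init (x - sSup L • emb p) = Fin.init x - sSup L • p := by
    funext j'; simp [Fin.init, emb]
  rw [hlast, hinit, hlim]
  exact ⟨by linarith, smul_mem_smul_set hb⟩

end AuxLemmas


section DualAttain

variable {n : ℕ}

set_option synthInstance.maxHeartbeats 1000000 in
set_option maxHeartbeats 2000000 in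
/-- Core duality lemma: if `w` lies on the boundary of `sstar • Q` (i.e. in `sstar • Q` but in
no smaller dilate), then there is an extreme point `φ` of the dual with `φ w = sstar`, and `φ`
attains the value 1 at some point of the generating finite set `W`. -/
lemma dual_attain (Q : Set (Fin n → ℝ)) (W : Finset (Fin n → ℝ))
    (hQW : Q = convexHull ℝ (W : Set (Fin n → ℝ)))
    (h0 : (0 : Fin n → ℝ) ∈ intrinsicInterior ℝ Q)
    (w : Fin n → ℝ) (hw : w ∈ Submodule.span ℝ Q)
    (sstar : ℝ) (hspos : 0 < sstar) (hin : w ∈ sstar • Q)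
    (hmin : ∀ s : ℝ, 0 ≤ s → w ∈ s • Q → sstar ≤ s) :
    ∃ φ ∈ Set.extremePoints ℝ (dualSet Q), φ ⟨w, hw⟩ = sstar ∧
      ∃ w0 ∈ W, ∃ hw0 : w0 ∈ Submodule.span ℝ Q, φ ⟨w0, hw0⟩ = 1 := by
  have h0Q : (0 : Fin n → ℝ) ∈ Q := intrinsicInterior_subset h0
  have hQne : Q.Nonempty := ⟨0, h0Q⟩
  have hQconv : Convex ℝ Q := hQW ▸ convex_convexHull ℝ _
  have hQcomp : IsCompact Q := hQW ▸ W.finite_toSet.isCompact_convexHull (𝕜 := ℝ)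
  set E := Submodule.span ℝ Q with hEdef
  -- small ball in the span is inside Q
  obtain ⟨ε, hεpos, hball⟩ :
      ∃ ε : ℝ, 0 < ε ∧ ∀ y : Fin n → ℝ, y ∈ E → ‖y‖ < ε → y ∈ Q := by
    obtain ⟨z, hzint, hz0⟩ := h0
    have hnhds : (Subtype.val ⁻¹' Q : Set (affineSpan ℝ Q)) ∈ nhds z :=
      mem_interior_iff_mem_nhds.1 hzint
    rw [nhds_subtype_eq_comap] at hnhds
    obtain ⟨U, hU, hUsub⟩ := hnhds
    rw [hz0] at hU
    obtain ⟨ε, hεpos, hεsub⟩ := Metric.mem_nhds_iff.1 hU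
    have hQA : Q ⊆ (affineSpan ℝ Q : Set (Fin n → ℝ)) := subset_affineSpan ℝ Q
    have h0A : (0 : Fin n → ℝ) ∈ affineSpan ℝ Q := hQA h0Q
    have hspan : ∀ y : Fin n → ℝ, y ∈ Submodule.span ℝ Q → y ∈ affineSpan ℝ Q := by
      intro y hy
      have hle : Submodule.span ℝ Q ≤ (affineSpan ℝ Q).direction := by
        rw [Submodule.span_le]
        intro q hq
        have := AffineSubspace.vsub_mem_direction (hQA hq) h0A
        simpa using this
      have hdir : y ∈ (affineSpan ℝ Q).direction := hle hy
      have := AffineSubspace.vadd_mem_of_mem_direction hdir h0A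
      simpa using this
    refine ⟨ε, hεpos, fun y hy hnorm => ?_⟩
    have hyA : y ∈ affineSpan ℝ Q := hspan y hy
    have hyU : y ∈ U := by
      apply hεsub
      rw [Metric.mem_ball, dist_zero_right]
      exact hnorm
    exact hUsub (show (⟨y, hyA⟩ : affineSpan ℝ Q) ∈ Subtype.val ⁻¹' U from hyU)
  -- the dual body, as continuous linear maps
  set D : Set (↥E →L[ℝ] ℝ) := {f | ∀ a : ↥E, (a : Fin n → ℝ) ∈ Q → f a ≤ 1} with hDdef
  have hD0 : (0 : ↥E →L[ℝ] ℝ) ∈ D := by intro a _; simp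
  have hDconv : Convex ℝ D := by
    intro f hf g hg a b ha hb hab
    intro y hy
    have h1 := hf y hy
    have h2 := hg y hy
    simp only [ContinuousLinearMap.add_apply, ContinuousLinearMap.coe_smul',
      Pi.smul_apply, smul_eq_mul]
    nlinarith
  have hDclosed : IsClosed D := by
    have : D = ⋂ (a : ↥E) (_ : (a : Fin n → ℝ) ∈ Q), {f : ↥E →L[ℝ] ℝ | f a ≤ 1} := by
      ext f; simp [hDdef]
    rw [this]
    refine isClosed_iInter fun a => isClosed_iInter fun _ => ?_
    exact isClosed_le ((ContinuousLinearMap.apply ℝ ℝ a).continuous) continuous_const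
  have hDbdd : ∀ f ∈ D, ‖f‖ ≤ 2 / ε := by
    intro f hf
    refine ContinuousLinearMap.opNorm_le_bound f (by positivity) fun y => ?_
    rcases eq_or_ne y 0 with rfl | hy0
    · simp
    · have hny : 0 < ‖y‖ := norm_pos_iff.2 hy0
      have hny' : ‖y‖ ≠ 0 := ne_of_gt hny
      set c : ℝ := ε / (2 * ‖y‖) with hcdef
      have hcpos : 0 < c := by positivity
      have hcoe : ‖(y : Fin n → ℝ)‖ = ‖y‖ := rfl
      have hnormc : ∀ z : ↥E, z = c • y ∨ z = -(c • y) → (z : Fin n → ℝ) ∈ Q := by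
        rintro z (rfl | rfl) <;>
        · refine hball _ (SetLike.coe_mem _) ?_
          simp only [Submodule.coe_smul, Submodule.coe_neg, norm_neg, norm_smul,
            Real.norm_eq_abs, abs_of_pos hcpos, hcoe]
          have : c * ‖y‖ = ε / 2 := by
            have hamb : ‖(y : Fin n → ℝ)‖ ≠ 0 := hny'
            rw [hcdef]; field_simp [hny']
          rw [this]; linarith
      have h1 : f (c • y) ≤ 1 := hf _ (hnormc _ (Or.inl rfl))
      have h2 : f (-(c • y)) ≤ 1 := hf _ (hnormc _ (Or.inr rfl))
      simp only [map_smul, smul_eq_mul] at h1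
      simp only [map_neg, map_smul, smul_eq_mul] at h2
      have habs : |f y| ≤ 1 / c := by
      
        rw [abs_le]
        constructor
        · rw [neg_le, le_div_iff₀ hcpos]
          nlinarith
        · rw [le_div_iff₀ hcpos]
          nlinarith
      have hfin : (1 : ℝ) / c = 2 / ε * ‖y‖ := by
        rw [hcdef]; field_simp
      rw [hfin] at habs
      exact habs
  haveI : ProperSpace (↥E →L[ℝ] ℝ) := FiniteDimensional.proper ℝ (↥E →L[ℝ] ℝ)
  have hDcomp : IsCompact D :=
    Metric.isCompact_of_isClosed_isBounded (α := ↥E →L[ℝ] ℝ) hDclosed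
      (isBounded_iff_forall_norm_le.2 ⟨2 / ε, hDbdd⟩)
  set wbar : ↥E := ⟨w, hw⟩ with hwbar
  -- maximum of evaluation at w over D
  have hevalcont : Continuous fun f : ↥E →L[ℝ] ℝ => f wbar :=
    (ContinuousLinearMap.apply ℝ ℝ wbar).continuous
  obtain ⟨f1, hf1D, hf1max⟩ := hDcomp.exists_isMaxOn ⟨0, hD0⟩ hevalcont.continuousOn
  -- every element of D evaluates at most sstar on w
  have hle : ∀ f ∈ D, f wbar ≤ sstar := by
    intro f hf
    obtain ⟨q, hq, hqe⟩ := hin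
    have hqspan : q ∈ E := Submodule.subset_span hq
    have hwq : wbar = sstar • (⟨q, hqspan⟩ : ↥E) := by
      apply Subtype.ext
      simp [hwbar, ← hqe]
    rw [hwq, map_smul, smul_eq_mul]
    have := hf ⟨q, hqspan⟩ hq
    nlinarith
  -- and the maximum equals sstar
  have hge : sstar ≤ f1 wbar := by
    by_contra hlt
    push_neg at hlt
    set s' : ℝ := (max (f1 wbar) 0 + sstar) / 2 with hs'def
    have hs'pos : 0 < s' := by
      have : 0 ≤ max (f1 wbar) 0 := le_max_right _ _
      rw [hs'def]; linarith
    have hs'lt : s' < sstar := by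
      have : max (f1 wbar) 0 < sstar := max_lt hlt hspos
      rw [hs'def]; linarith
    have hfs' : ∀ f ∈ D, f wbar ≤ s' := by
      intro f hf
      have h1 : f wbar ≤ f1 wbar := hf1max hf
      have : f1 wbar ≤ max (f1 wbar) 0 := le_max_left _ _
      rw [hs'def]; linarith
    -- bipolar: w ∈ s' • Q
    have hwin' : w ∈ s' • Q := by
      by_contra hns
      set u : ↥E := (s')⁻¹ • wbar with hudef
      have hunotin : (u : Fin n → ℝ) ∉ Q := by
        intro hu
        apply hns
        refine ⟨u, hu, ?_⟩
        show s' • ((s')⁻¹ • w) = w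
        rw [smul_inv_smul₀ (ne_of_gt hs'pos)]
      have hQbar : Convex ℝ ((Subtype.val ⁻¹' Q) : Set ↥E) :=
        hQconv.linear_preimage (E.subtype)
      have hQbarclosed : IsClosed ((Subtype.val ⁻¹' Q) : Set ↥E) :=
        hQcomp.isClosed.preimage continuous_subtype_val
      obtain ⟨g, u0, hg, hgu⟩ :=
        geometric_hahn_banach_closed_point hQbar hQbarclosed hunotin
      have hu0pos : 0 < u0 := by
        have := hg 0 (by simpa using h0Q)
        simpa using this
      have hfD' : (u0⁻¹ • g) ∈ D := by
        intro a ha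
        have := hg a ha
        simp only [ContinuousLinearMap.coe_smul', Pi.smul_apply, smul_eq_mul]
        rw [inv_mul_le_iff₀ hu0pos]
        linarith
      have hle' : (u0⁻¹ • g) wbar ≤ s' := hfs' _ hfD'
      have hgwbar : g wbar = s' * g u := by
        have hwu : wbar = s' • u := by
          rw [hudef, smul_inv_smul₀ (ne_of_gt hs'pos)]
        rw [hwu, map_smul, smul_eq_mul]
      have h5 : u0⁻¹ * (s' * g u) ≤ s' := by
        simpa [hgwbar] using hle'
      have h6 : 1 < u0⁻¹ * g u := by
        rw [← inv_mul_cancel₀ (ne_of_gt hu0pos)]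
        exact mul_lt_mul_of_pos_left hgu (inv_pos.2 hu0pos)
      nlinarith
    exact absurd (hmin s' (le_of_lt hs'pos) hwin') (not_le.2 hs'lt)
  have hf1val : f1 wbar = sstar := le_antisymm (hle f1 hf1D) hge
  -- the exposed face of maximizers
  set F : Set (↥E →L[ℝ] ℝ) :=
    {f ∈ D | ∀ g ∈ D, (ContinuousLinearMap.apply ℝ ℝ wbar) g ≤
      (ContinuousLinearMap.apply ℝ ℝ wbar) f} with hFdef
  have hexp : IsExposed ℝ D F := fun _ => ⟨ContinuousLinearMap.apply ℝ ℝ wbar, rfl⟩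
  have hf1F : f1 ∈ F := ⟨hf1D, fun g hg => hf1max hg⟩
  have hFcomp : IsCompact F := hexp.isCompact hDcomp
  obtain ⟨f0, hf0ext⟩ := hFcomp.extremePoints_nonempty ⟨f1, hf1F⟩
  have hf0D : f0 ∈ Set.extremePoints ℝ D :=
    (hexp.isExtreme).extremePoints_subset_extremePoints hf0ext
  have hf0F : f0 ∈ F := hf0ext.1
  have hf0val : f0 wbar = sstar := by
    have h1 : f0 wbar ≤ sstar := hle f0 hf0F.1
    have h2 : sstar ≤ f0 wbar := by
      have := hf0F.2 f1 hf1D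
      simp only [ContinuousLinearMap.apply_apply] at this
      linarith [hf1val ▸ this]
    linarith
  -- pass to the algebraic dual
  set φ : Module.Dual ℝ ↥E := (f0 : ↥E →ₗ[ℝ] ℝ) with hφdef
  have hφapp : ∀ a : ↥E, φ a = f0 a := fun a => rfl
  have hφD : φ ∈ dualSet Q := fun a ha => hf0F.1 a ha
  have hφext : φ ∈ Set.extremePoints ℝ (dualSet Q) := by
    refine mem_extremePoints.2 ⟨hφD, ?_⟩
    intro x1 hx1 x2 hx2 hseg
    obtain ⟨a, b, ha, hb, hab, he⟩ := hseg
    set g1 := LinearMap.toContinuousLinearMap x1 with hg1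
    set g2 := LinearMap.toContinuousLinearMap x2 with hg2
    have hg1D : g1 ∈ D := by
      intro y hy
      have := hx1 y hy
      simpa [hg1] using this
    have hg2D : g2 ∈ D := by
      intro y hy
      have := hx2 y hy
      simpa [hg2] using this
    have hseg' : f0 ∈ openSegment ℝ g1 g2 := by
      refine ⟨a, b, ha, hb, hab, ?_⟩
      ext y
      have := congrFun (congrArg (fun ψ : Module.Dual ℝ ↥E => (ψ : ↥E → ℝ)) he) y
      simpa [hg1, hg2, hφapp] using this
    obtain ⟨he1, he2⟩ := (mem_extremePoints.1 hf0D).2 _ hg1D _ hg2D hseg'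
    constructor
    · apply LinearMap.ext; intro y
      have := congrFun (congrArg (fun f : ↥E →L[ℝ] ℝ => (f : ↥E → ℝ)) he1) y
      simpa [hg1, hφapp] using this
    · apply LinearMap.ext; intro y
      have := congrFun (congrArg (fun f : ↥E →L[ℝ] ℝ => (f : ↥E → ℝ)) he2) y
      simpa [hg2, hφapp] using this
  -- extension of φ to the ambient space
  obtain ⟨ψ, hψ⟩ := LinearMap.exists_extend φ
  have hψapp : ∀ a : ↥E, ψ (a : Fin n → ℝ) = φ a := by
    intro a
    have := congrFun (congrArg (fun f : ↥E →ₗ[ℝ] ℝ => (f : ↥E → ℝ)) hψ) a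
    simpa using this
  -- W is nonempty
  have hWne : W.Nonempty := by
    rw [Finset.nonempty_iff_ne_empty]
    rintro rfl
    simp [hQW] at h0Q
  -- maximum of ψ over W
  obtain ⟨w0, hw0W, hw0ψ⟩ := Finset.mem_image.1 ((W.image ψ).max'_mem (hWne.image ψ))
  have hMub : ∀ q ∈ Q, ψ q ≤ ψ w0 := by
    rw [hQW]
    have hconv : Convex ℝ {y : Fin n → ℝ | ψ y ≤ ψ w0} := convex_halfSpace_le ψ.isLinear (ψ w0)
    have hsub : (W : Set (Fin n → ℝ)) ⊆ {y | ψ y ≤ ψ w0} := by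
      intro v hv
      rw [Set.mem_setOf_eq, hw0ψ]
      exact Finset.le_max' _ _ (Finset.mem_image_of_mem ψ hv)
    exact fun q hq => convexHull_min hsub hconv hq
  have hw0Q : w0 ∈ Q := hQW ▸ subset_convexHull ℝ _ hw0W
  have hw0span : w0 ∈ E := Submodule.subset_span hw0Q
  have hM1 : ψ w0 = 1 := by
    have hMle : ψ w0 ≤ 1 := by
      have := hφD ⟨w0, hw0span⟩ hw0Q
      rw [← hψapp ⟨w0, hw0span⟩] at this; exact this
    rcases eq_or_lt_of_le hMle with h | hMlt
    · exact h
    · exfalso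
      set t : ℝ := max (ψ w0) (1/2) with htdef
      have ht0 : 0 < t := lt_of_lt_of_le (by norm_num) (le_max_right _ _)
      have ht1 : t < 1 := max_lt hMlt (by norm_num)
      have hg'D : t⁻¹ • f0 ∈ D := by
        intro a ha
        have h1 : f0 a ≤ ψ w0 := by
          rw [← hφapp a, ← hψapp a]
          exact hMub _ ha
        have h2 : f0 a ≤ t := le_trans h1 (le_max_left _ _)
        simp only [ContinuousLinearMap.coe_smul', Pi.smul_apply, smul_eq_mul]
        rw [inv_mul_le_iff₀ ht0]
        linarith
      have hseg : f0 ∈ openSegment ℝ (t⁻¹ • f0) (0 : ↥E →L[ℝ] ℝ) := by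
        refine ⟨t, 1 - t, ht0, by linarith, by ring, ?_⟩
        rw [smul_zero, add_zero, smul_inv_smul₀ (ne_of_gt ht0)]
      obtain ⟨-, he0⟩ := (mem_extremePoints.1 hf0D).2 _ hg'D _ hD0 hseg
      have : f0 wbar = 0 := by rw [← he0]; simp
      rw [hf0val] at this
      linarith
  refine ⟨φ, hφext, ?_, w0, hw0W, hw0span, ?_⟩
  · rw [hφapp, hf0val]
  · rw [← hψapp ⟨w0, hw0span⟩]
    exact hM1

end DualAttain


section Crux

variable {n : ℕ}

set_option maxHeartbeats 1000000 in
/-- Key step: the projection `ε^p` of a lattice point of `cone P` is a lattice point, for a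
Gorenstein polytope. -/
lemma crux {P : Set (Fin n → ℝ)} {V : Finset (Fin n → ℝ)}
    (hVlat : ∀ v ∈ V, IsLat v) (hPV : P = convexHull ℝ (V : Set (Fin n → ℝ)))
    {k : ℕ} (hk : 0 < k) {m : Fin n → ℝ} (hmLat : IsLat m)
    (hrefl : IsReflexive ((fun x => x - m) '' ((k : ℝ) • P)))
    {x : Fin (n + 1) → ℝ} (hx : x ∈ cone P) (hxlat : IsLat x) :
    IsLat (epsP ((k : ℝ)⁻¹ • m) P x) := by
  have hkR : (k : ℝ) ≠ 0 := Nat.cast_ne_zero.2 hk.ne'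
  have hkpos : (0 : ℝ) < k := Nat.cast_pos.2 hk
  set Q : Set (Fin n → ℝ) := (fun x => x - m) '' ((k : ℝ) • P) with hQdef
  have h0Q : (0 : Fin n → ℝ) ∈ Q := intrinsicInterior_subset hrefl.2.1
  have hPne : P.Nonempty := by
    obtain ⟨q, hq⟩ : Q.Nonempty := ⟨0, h0Q⟩
    obtain ⟨y, ⟨a, ha, rfl⟩, -⟩ := hq
    exact ⟨a, ha⟩
  have hPc : IsCompact P := hPV ▸ V.finite_toSet.isCompact_convexHull (𝕜 := ℝ)
  set p : Fin n → ℝ := (k : ℝ)⁻¹ • m with hpdef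
  set L : Set ℝ := {l : ℝ | x - l • emb p ∈ cone P} with hLdef
  set lam : ℝ := sSup L with hlam
  -- attainment
  have hattain : x - lam • emb p ∈ cone P := csSup_mem_coneL hPne hPc p hx
  have hiff : ∀ l : ℝ, x - l • emb p ∈ cone P ↔
      l ≤ x (Fin.last n) ∧
        (k : ℝ) • Fin.init x - x (Fin.last n) • m ∈ (x (Fin.last n) - l) • Q :=
    fun l => sub_emb_mem_cone_iff hPne hkR m x l
  set w : Fin n → ℝ := (k : ℝ) • Fin.init x - x (Fin.last n) • m with hwdef
  obtain ⟨hlamle, hwin⟩ := (hiff lam).1 hattain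
  set sstar : ℝ := x (Fin.last n) - lam with hsdef
  have hsnonneg : 0 ≤ sstar := by rw [hsdef]; linarith
  have hLbdd : BddAbove L := by
    refine ⟨x (Fin.last n), fun l hl => ?_⟩
    exact ((hiff l).1 hl).1
  have hmin : ∀ s : ℝ, 0 ≤ s → w ∈ s • Q → sstar ≤ s := by
    intro s hs hws
    have hlmem : x (Fin.last n) - s ∈ L := by
      rw [hLdef, Set.mem_setOf_eq, hiff]
      constructor
      · linarith
      · have : x (Fin.last n) - (x (Fin.last n) - s) = s := by ring
        rw [this]; exact hws
    have := le_csSup hLbdd hlmem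
    rw [hsdef]; linarith
  -- integer data
  obtain ⟨hz, hhz⟩ := hxlat (Fin.last n)
  have hinitlat : IsLat (Fin.init x) := fun j => hxlat j.castSucc
  -- two cases
  have hepsP : epsP p P x = x - lam • emb p := rfl
  rcases eq_or_lt_of_le hsnonneg with hs0 | hspos
  · -- s* = 0 : w = 0 and the projection is the origin on coordinates
    have hQne : Q.Nonempty := ⟨0, h0Q⟩
    have hw0 : w = 0 := by
      have h1 : w ∈ (0 : ℝ) • Q := by rw [hs0]; exact hwin
      rw [Set.zero_smul_set hQne] at h1
      exact h1
    have hlj : lam = x (Fin.last n) := by rw [hsdef] at hs0; linarith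
    intro i
    refine Fin.lastCases ?_ ?_ i
    · refine ⟨0, ?_⟩
      rw [hepsP]
      show x (Fin.last n) - lam * emb p (Fin.last n) = ((0 : ℤ) : ℝ)
      rw [emb_last, hlj]
      push_cast
      ring
    · intro j
      refine ⟨0, ?_⟩
      have hwj := congrFun hw0 j
      simp only [hwdef, Pi.sub_apply, Pi.smul_apply, smul_eq_mul, Pi.zero_apply] at hwj
      rw [hepsP]
      show x j.castSucc - lam * emb p j.castSucc = ((0 : ℤ) : ℝ)
      have hembj : emb p j.castSucc = (k : ℝ)⁻¹ * m j := by
        simp [emb, hpdef]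
      rw [hembj, hlj]
      have hinitj : Fin.init x j = x j.castSucc := rfl
      rw [← hinitj]
      push_cast
      have hmj : x (Fin.last n) * m j = (k : ℝ) * Fin.init x j := by linarith
      rw [mul_comm ((k : ℝ)⁻¹) (m j), ← mul_assoc, hmj]
      field_simp
      ring
  · -- s* > 0 : use duality
    have hQW : Q = convexHull ℝ ((V.image fun v => (k : ℝ) • v - m : Finset (Fin n → ℝ)) :
        Set (Fin n → ℝ)) := by
      rw [hQdef, hPV]
      have himg : (fun x => x - m) '' ((k : ℝ) • convexHull ℝ (V : Set (Fin n → ℝ))) =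
          (AffineEquiv.constVAdd ℝ (Fin n → ℝ) (-m)).toAffineMap ''
            (convexHull ℝ ((k : ℝ) • (V : Set (Fin n → ℝ)))) := by
        rw [convexHull_smul]
        apply Set.image_congr
        intro a _
        show a - m = -m + a
        ring
      rw [himg, AffineMap.image_convexHull]
      congr 1
      rw [Finset.coe_image, ← Set.image_smul, ← Set.image_comp]
      apply Set.image_congr
      intro a _
      show -m + (k : ℝ) • a = (k : ℝ) • a - m
      ring
    have hwspan : w ∈ Submodule.span ℝ Q := by
      obtain ⟨q, hq, hqe⟩ := hwin
      rw [← hqe]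
      exact Submodule.smul_mem _ _ (Submodule.subset_span hq)
    obtain ⟨φ, hφext, hφw, w0, hw0W, hw0span, hφw0⟩ :=
      dual_attain Q _ hQW hrefl.2.1 w hwspan sstar hspos hwin hmin
    obtain ⟨v0, hv0V, hv0e⟩ := Finset.mem_image.1 hw0W
    have hv0lat := hVlat v0 hv0V
    -- the auxiliary lattice vector u1
    set u1 : Fin n → ℝ := Fin.init x - x (Fin.last n) • v0 with hu1def
    have hw0Q : w0 ∈ Q := by
      rw [hQW]; exact subset_convexHull ℝ _ hw0W
    have hdecomp : w = (k : ℝ) • u1 + x (Fin.last n) • w0 := by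
      funext j
      have h := congrFun hv0e j
      simp only [Pi.sub_apply, Pi.smul_apply, smul_eq_mul] at h
      simp only [hwdef, hu1def, Pi.add_apply, Pi.sub_apply, Pi.smul_apply, smul_eq_mul]
      rw [← h]
      ring
    have hu1span : u1 ∈ Submodule.span ℝ Q := by
      have hk1 : (k : ℝ) • u1 = w - x (Fin.last n) • w0 := by
        rw [hdecomp]; module
      have h1 : (k : ℝ) • u1 ∈ Submodule.span ℝ Q := by
        rw [hk1]
        exact Submodule.sub_mem _ hwspan
          (Submodule.smul_mem _ _ (Submodule.subset_span hw0Q))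
      have h2 : u1 = (k : ℝ)⁻¹ • ((k : ℝ) • u1) := by
        rw [smul_smul, inv_mul_cancel₀ hkR, one_smul]
      rw [h2]
      exact Submodule.smul_mem _ _ h1
    have hu1lat : IsLat u1 := by
      intro j
      obtain ⟨aj, haj⟩ := hinitlat j
      obtain ⟨bj, hbj⟩ := hv0lat j
      refine ⟨aj - hz * bj, ?_⟩
      simp only [hu1def, Pi.sub_apply, Pi.smul_apply, smul_eq_mul]
      rw [haj, hbj, hhz]
      push_cast
      ring
    obtain ⟨z, hzφ⟩ := hrefl.2.2 φ hφext ⟨u1, hu1span⟩ hu1lat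
    -- compute s* = k z + h
    have hsubeq : (⟨w, hwspan⟩ : Submodule.span ℝ Q) =
        (k : ℝ) • (⟨u1, hu1span⟩ : Submodule.span ℝ Q) +
          x (Fin.last n) • (⟨w0, hw0span⟩ : Submodule.span ℝ Q) := by
      apply Subtype.ext
      simp only [Submodule.coe_add, Submodule.coe_smul]
      exact hdecomp
    have hsval : sstar = (k : ℝ) * z + x (Fin.last n) := by
      rw [← hφw, hsubeq, map_add, map_smul, map_smul, smul_eq_mul, smul_eq_mul,
        hzφ, hφw0, mul_one]
    have hlamval : lam = -((k : ℝ) * z) := by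
      rw [hsdef] at hsval; linarith
    -- conclude
    intro i
    refine Fin.lastCases ?_ ?_ i
    · refine ⟨(k : ℤ) * z + hz, ?_⟩
      rw [hepsP]
      show x (Fin.last n) - lam * emb p (Fin.last n) = _
      rw [emb_last, hlamval, hhz]
      push_cast
      ring
    · intro j
      obtain ⟨aj, haj⟩ := hinitlat j
      obtain ⟨mj, hmj⟩ := hmLat j
      refine ⟨aj + z * mj, ?_⟩
      rw [hepsP]
      show x j.castSucc - lam * emb p j.castSucc = _
      have hembj : emb p j.castSucc = (k : ℝ)⁻¹ * m j := by simp [emb, hpdef]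
      rw [hembj, hlamval]
      have hinitj : Fin.init x j = x j.castSucc := rfl
      rw [← hinitj, haj, hmj]
      push_cast
      field_simp
      ring
end Crux

/-- Proposition 5.7 (Gorenstein polytopes have lattice `p`-lower lattice
envelopes). -/
theorem gorenstein_pllenv_eq {n : ℕ} (hn : 1 ≤ n) (P : Set (Fin n → ℝ))
    (k : ℕ) (hP : IsGorenstein P k) (m : Fin n → ℝ) (hmLat : IsLat m)
    (hmInt : m ∈ intrinsicInterior ℝ ((k : ℝ) • P))
    (hmUnique : ∀ m' : Fin n → ℝ, IsLat m' → m' ∈ intrinsicInterior ℝ ((k : ℝ) • P) → m' = m) :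
    pllenv ((k : ℝ)⁻¹ • m) P = latt (plenv ((k : ℝ)⁻¹ • m) P) := by
  obtain ⟨⟨V, hVlat, hPV⟩, hk, m', hm'lat, hm'refl⟩ := hP
  -- identify m' with m using uniqueness
  have hm'm : m' = m := by
    have h0 := hm'refl.2.1
    have himg : (fun x => x - m') '' ((k : ℝ) • P) =
        ⇑(AffineIsometryEquiv.constVAdd ℝ (Fin n → ℝ) (-m')).toAffineIsometry ''
          ((k : ℝ) • P) := by
      apply Set.image_congr
      intro a _
      show a - m' = -m' + a
      ring
    rw [himg, AffineIsometry.image_intrinsicInterior] at h0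
    obtain ⟨y, hy, hy0⟩ := h0
    have hym' : m' = y := by
      have h1 : -m' + y = 0 := hy0
      exact neg_add_eq_zero.1 h1
    rw [hym']
    exact hmUnique y (hym' ▸ hm'lat) hy
  rw [hm'm] at hm'refl
  have hPne : P.Nonempty := by
    have h1 : m ∈ (k : ℝ) • P := intrinsicInterior_subset hmInt
    obtain ⟨a, ha, -⟩ := h1
    exact ⟨a, ha⟩
  have hPc : IsCompact P := hPV ▸ V.finite_toSet.isCompact_convexHull (𝕜 := ℝ)
  set p : Fin n → ℝ := (k : ℝ)⁻¹ • m with hpdef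
  ext x
  constructor
  · rintro ⟨y, ⟨hyC, hyLat⟩, rfl⟩
    exact ⟨⟨y, hyC, rfl⟩, crux hVlat hPV hk hmLat hm'refl hyC hyLat⟩
  · rintro ⟨⟨y, hyC, rfl⟩, hxLat⟩
    have hxC : epsP p P y ∈ cone P := csSup_mem_coneL hPne hPc p hyC
    refine ⟨epsP p P y, ⟨hxC, hxLat⟩, ?_⟩
    set Λ : ℝ := sSup {l : ℝ | y - l • emb p ∈ cone P} with hΛ
    have hLbdd : BddAbove {l : ℝ | y - l • emb p ∈ cone P} := by
      refine ⟨y (Fin.last n), fun l hl => ?_⟩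
      have h1 := ((mem_cone_iff hPne _).1 hl).1
      have hlast : (y - l • emb p) (Fin.last n) = y (Fin.last n) - l := by simp [emb]
      rw [hlast] at h1
      linarith
    have h0max : IsGreatest {l : ℝ | epsP p P y - l • emb p ∈ cone P} 0 := by
      constructor
      · show epsP p P y - (0 : ℝ) • emb p ∈ cone P
        simpa using hxC
      · intro l hl
        have heq : epsP p P y - l • emb p = y - (Λ + l) • emb p := by
          show (y - Λ • emb p) - l • emb p = y - (Λ + l) • emb p
          module
        rw [Set.mem_setOf_eq, heq] at hl
        have hle : Λ + l ≤ Λ := le_csSup hLbdd hl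
        linarith
    show epsP p P (epsP p P y) = epsP p P y
    have : epsP p P (epsP p P y) =
        epsP p P y - sSup {l : ℝ | epsP p P y - l • emb p ∈ cone P} • emb p := rfl
    rw [this, h0max.csSup_eq]
    simp

end ArxivFreeSum
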